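/- For every prime p with p ≠ 2, p ≠ 3 and p ≠ 5, the projective special linear group PSL(2, 𝔽_p) admits an unmixed Beauville structure. -/

import Mathlib

open Matrix

/-- `Σ(a,c)`: the set of all conjugates of all powers of `a`, `c` and `ac`. -/
def beauvilleSigma {G : Type*} [Group G] (a c : G) : Set G :=
  ⋃ g : G, ⋃ i : ℕ, {g * a ^ i * g⁻¹, g * c ^ i * g⁻¹, g * (a * c) ^ i * g⁻¹}

/-- An unmixed Beauville structure on `G`: two generating pairs whose associated
sets `Σ` intersect trivially. -/
def IsUnmixedBeauvilleStructure {G : Type*} [Group G] (a₁ c₁ a₂ c₂ : G) : Prop :=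
  Subgroup.closure {a₁, c₁} = ⊤ ∧ Subgroup.closure {a₂, c₂} = ⊤ ∧
    beauvilleSigma a₁ c₁ ∩ beauvilleSigma a₂ c₂ = {1}

/- ### Auxiliary material -/

section Aux

abbrev SL2 (p : ℕ) := Matrix.SpecialLinearGroup (Fin 2) (ZMod p)

lemma natCast_ne_zero_of_not_dvd {p q : ℕ} (h : ¬ p ∣ q) : ((q : ℕ) : ZMod p) ≠ 0 := by
  rw [Ne, ZMod.natCast_eq_zero_iff]; exact h

lemma two_ne_zero_zmod {p : ℕ} (hp : p.Prime) (hp2 : p ≠ 2) : (2 : ZMod p) ≠ 0 := by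
  have : ¬ p ∣ 2 := fun h => hp2 ((Nat.prime_dvd_prime_iff_eq hp Nat.prime_two).mp h)
  simpa using natCast_ne_zero_of_not_dvd this

variable {p : ℕ} [Fact p.Prime]

/-- upper triangular elementary element of `SL(2, ZMod p)` -/
def tEl (z : ZMod p) : SL2 p := ⟨!![1, z; 0, 1], by simp [Matrix.det_fin_two_of]⟩

/-- lower triangular elementary element of `SL(2, ZMod p)` -/
def lEl (z : ZMod p) : SL2 p := ⟨!![1, 0; z, 1], by simp [Matrix.det_fin_two_of]⟩

lemma tEl_mul (x y : ZMod p) : tEl x * tEl y = tEl (x + y) := by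
  apply Subtype.ext
  simp only [Matrix.SpecialLinearGroup.coe_mul]
  ext i j
  fin_cases i <;> fin_cases j <;>
    simp [tEl, Matrix.SpecialLinearGroup.coe_mul, Matrix.mul_apply, Fin.sum_univ_two] <;>
    try ring

lemma tEl_zero : (tEl 0 : SL2 p) = 1 := by
  apply Subtype.ext; simp [tEl]; ext i j; fin_cases i <;> fin_cases j <;> simp

lemma tEl_pow (x : ZMod p) (n : ℕ) : (tEl x) ^ n = tEl (n • x) := by
  induction n with
  | zero => simpa using tEl_zero.symm
  | succ n ih => rw [pow_succ, ih, tEl_mul, succ_nsmul]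

lemma lEl_mul (x y : ZMod p) : lEl x * lEl y = lEl (x + y) := by
  apply Subtype.ext
  simp only [Matrix.SpecialLinearGroup.coe_mul]
  ext i j
  fin_cases i <;> fin_cases j <;>
    simp [lEl, Matrix.SpecialLinearGroup.coe_mul, Matrix.mul_apply, Fin.sum_univ_two] <;>
    try ring

lemma lEl_zero : (lEl 0 : SL2 p) = 1 := by
  apply Subtype.ext; simp [lEl]; ext i j; fin_cases i <;> fin_cases j <;> simp

lemma lEl_pow (x : ZMod p) (n : ℕ) : (lEl x) ^ n = lEl (n • x) := by
  induction n with
  | zero => simpa using lEl_zero.symm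
  | succ n ih => rw [pow_succ, ih, lEl_mul, succ_nsmul]

lemma tEl_inv (x : ZMod p) : (tEl x)⁻¹ = tEl (-x) := by
  rw [inv_eq_iff_mul_eq_one, tEl_mul, add_neg_cancel, tEl_zero]

lemma lEl_inv (x : ZMod p) : (lEl x)⁻¹ = lEl (-x) := by
  rw [inv_eq_iff_mul_eq_one, lEl_mul, add_neg_cancel, lEl_zero]

lemma tEl_pow_card (x : ZMod p) : (tEl x) ^ p = 1 := by
  rw [tEl_pow, nsmul_eq_mul, ZMod.natCast_self, zero_mul, tEl_zero]

lemma lEl_pow_card (x : ZMod p) : (lEl x) ^ p = 1 := by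
  rw [lEl_pow, nsmul_eq_mul, ZMod.natCast_self, zero_mul, lEl_zero]

/-- a nonzero power of an elementary element recovers `tEl 1` -/
lemma tEl_one_mem {z : ZMod p} (hz : z ≠ 0) {H : Subgroup (SL2 p)} (hmem : tEl z ∈ H) :
    tEl 1 ∈ H := by
  have h1 : (tEl z) ^ (z⁻¹).val = tEl 1 := by
    rw [tEl_pow, nsmul_eq_mul, ZMod.natCast_val, ZMod.cast_id, inv_mul_cancel₀ hz]
  exact h1 ▸ pow_mem hmem _

lemma lEl_one_mem {z : ZMod p} (hz : z ≠ 0) {H : Subgroup (SL2 p)} (hmem : lEl z ∈ H) :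
    lEl 1 ∈ H := by
  have h1 : (lEl z) ^ (z⁻¹).val = lEl 1 := by
    rw [lEl_pow, nsmul_eq_mul, ZMod.natCast_val, ZMod.cast_id, inv_mul_cancel₀ hz]
  exact h1 ▸ pow_mem hmem _

lemma tEl_mem_closure_tl (z : ZMod p) :
    tEl z ∈ Subgroup.closure ({tEl 1, lEl 1} : Set (SL2 p)) := by
  have : tEl z = (tEl 1 : SL2 p) ^ z.val := by
    rw [tEl_pow]; congr 1; simp [ZMod.natCast_val, ZMod.cast_id]
  rw [this]
  exact pow_mem (Subgroup.subset_closure (by simp)) _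

lemma lEl_mem_closure_tl (z : ZMod p) :
    lEl z ∈ Subgroup.closure ({tEl 1, lEl 1} : Set (SL2 p)) := by
  have : lEl z = (lEl 1 : SL2 p) ^ z.val := by
    rw [lEl_pow]; congr 1; simp [ZMod.natCast_val, ZMod.cast_id]
  rw [this]
  exact pow_mem (Subgroup.subset_closure (by simp)) _

lemma mem_closure_tl_of_ne_zero (M : SL2 p)
    (hc : (M : Matrix (Fin 2) (Fin 2) (ZMod p)) 1 0 ≠ 0) :
    M ∈ Subgroup.closure ({tEl 1, lEl 1} : Set (SL2 p)) := by
  set a := (M : Matrix (Fin 2) (Fin 2) (ZMod p)) 0 0 with ha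
  set b := (M : Matrix (Fin 2) (Fin 2) (ZMod p)) 0 1 with hb
  set c := (M : Matrix (Fin 2) (Fin 2) (ZMod p)) 1 0 with hcc
  set d := (M : Matrix (Fin 2) (Fin 2) (ZMod p)) 1 1 with hd
  have hdet : a * d - b * c = 1 := by
    have := M.prop
    rw [Matrix.det_fin_two] at this
    exact this
  have key : M = tEl (-((1 - a) / c)) * (lEl c * tEl (b + ((1 - a) / c) * d)) := by
    apply Subtype.ext
    simp only [Matrix.SpecialLinearGroup.coe_mul]
    ext i j
    fin_cases i <;> fin_cases j <;>
      simp [tEl, lEl, Matrix.SpecialLinearGroup.coe_mul, Matrix.mul_apply, Fin.sum_univ_two,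
        ← ha, ← hb, ← hcc, ← hd] <;>
      field_simp <;> (first | ring1 | linear_combination (a - 1) * hdet | linear_combination hdet)
  rw [key]
  exact mul_mem (tEl_mem_closure_tl _) (mul_mem (lEl_mem_closure_tl _) (tEl_mem_closure_tl _))

lemma closure_tl_eq_top : Subgroup.closure ({tEl 1, lEl 1} : Set (SL2 p)) = ⊤ := by
  rw [eq_top_iff]
  intro M _
  by_cases hc : (M : Matrix (Fin 2) (Fin 2) (ZMod p)) 1 0 ≠ 0
  · exact mem_closure_tl_of_ne_zero M hc
  · push_neg at hc
    have hdet : (M : Matrix (Fin 2) (Fin 2) (ZMod p)) 0 0 *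
        (M : Matrix (Fin 2) (Fin 2) (ZMod p)) 1 1 = 1 := by
      have := M.prop
      rw [Matrix.det_fin_two, hc] at this
      simpa using this
    have ha0 : (M : Matrix (Fin 2) (Fin 2) (ZMod p)) 0 0 ≠ 0 := left_ne_zero_of_mul_eq_one hdet
    have hentry : ((lEl 1 * M : SL2 p) : Matrix (Fin 2) (Fin 2) (ZMod p)) 1 0 ≠ 0 := by
      have : ((lEl 1 * M : SL2 p) : Matrix (Fin 2) (Fin 2) (ZMod p)) 1 0
          = (M : Matrix (Fin 2) (Fin 2) (ZMod p)) 0 0 := by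
        simp only [Matrix.SpecialLinearGroup.coe_mul]
        simp [lEl, Matrix.SpecialLinearGroup.coe_mul, Matrix.mul_apply, Fin.sum_univ_two, hc]
      rw [this]; exact ha0
    have h2 := mem_closure_tl_of_ne_zero _ hentry
    have hM : M = (lEl 1)⁻¹ * (lEl 1 * M) := by group
    rw [hM]
    exact mul_mem (inv_mem (Subgroup.subset_closure (by simp))) h2
lemma pow_card_sq_sub_one {p : ℕ} [Fact p.Prime] (hp2 : p ≠ 2) (u : SL2 p)
    (ht : (((u : Matrix (Fin 2) (Fin 2) (ZMod p)) 0 0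
        + (u : Matrix (Fin 2) (Fin 2) (ZMod p)) 1 1) ^ 2 : ZMod p) ≠ 4) :
    u ^ (p * p - 1) = 1 := by
  have hp := (Fact.out : p.Prime)
  have hodd : Odd p := hp.odd_of_ne_two hp2
  have h2z : (2 : ZMod p) ≠ 0 := two_ne_zero_zmod hp hp2
  set x : Matrix (Fin 2) (Fin 2) (ZMod p) := ↑u with hx
  set a := x 0 0 with hadef; set b := x 0 1 with hbdef
  set c := x 1 0 with hcdef; set d := x 1 1 with hddef
  set t := a + d with htdef
  have ht4 : t ^ 2 ≠ 4 := ht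
  have hdet : a * d - b * c = 1 := by
    have := u.prop; rwa [Matrix.det_fin_two] at this
  have hchar : x * x = t • x - 1 := by
    ext i j
    fin_cases i <;> fin_cases j <;>
      simp [Matrix.mul_apply, Fin.sum_univ_two, Matrix.sub_apply, Matrix.smul_apply,
        Matrix.one_apply, smul_eq_mul, ← hadef, ← hbdef, ← hcdef, ← hddef] <;>
      first
        | ring1
        | linear_combination hdet
        | linear_combination -hdet
        | linear_combination 2 * hdet
        | linear_combination -2 * hdet
  have span : ∀ n : ℕ, ∃ α β : ZMod p,
      x ^ n = α • (1 : Matrix (Fin 2) (Fin 2) (ZMod p)) + β • x := by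
    intro n
    induction n with
    | zero => exact ⟨1, 0, by simp⟩
    | succ n ih =>
      obtain ⟨α, β, h⟩ := ih
      refine ⟨-β, α + β * t, ?_⟩
      rw [pow_succ, h, add_mul, smul_mul_assoc, smul_mul_assoc, one_mul, hchar, smul_sub,
        smul_smul]
      module
  have hfrob : x ^ p * x ^ p = t • x ^ p - 1 := by
    have h1 : x ^ p * x ^ p = (x * x) ^ p := ((Commute.refl x).mul_pow p).symm
    have hc : Commute (t • x) (-1 : Matrix (Fin 2) (Fin 2) (ZMod p)) := by
      simp [Commute, SemiconjBy]
    have h2 : (t • x - 1) ^ p = t • x ^ p - 1 := by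
      calc (t • x - 1) ^ p = (t • x + (-1)) ^ p := by rw [sub_eq_add_neg]
        _ = (t • x) ^ p + (-1) ^ p := add_pow_char_of_commute _ hc
        _ = t • x ^ p - 1 := by rw [smul_pow, ZMod.pow_card, hodd.neg_one_pow, sub_eq_add_neg]
    rw [h1, hchar, h2]
  obtain ⟨α, β, hp1⟩ := span p
  rw [hp1] at hfrob
  have E00 := congrFun (congrFun hfrob 0) 0
  have E01 := congrFun (congrFun hfrob 0) 1
  have E10 := congrFun (congrFun hfrob 1) 0
  have E11 := congrFun (congrFun hfrob 1) 1
  simp only [Matrix.mul_apply, Fin.sum_univ_two, Matrix.add_apply, Matrix.smul_apply,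
    Matrix.sub_apply, Matrix.one_apply, smul_eq_mul, if_true, if_false, Fin.zero_eq_one_iff,
    Fin.one_eq_zero_iff, ← hadef, ← hbdef, ← hcdef, ← hddef] at E00 E01 E10 E11
  norm_num at E00 E01 E10 E11
  set μ := α ^ 2 - β ^ 2 - t * α + 1 with hμdef
  set ν := 2 * α * β + β ^ 2 * t - t * β with hνdef
  have h00 : μ + ν * a = 0 := by rw [hμdef, hνdef]; linear_combination E00 + β ^ 2 * hdet
  have h01 : ν * b = 0 := by rw [hνdef]; linear_combination E01
  have h10 : ν * c = 0 := by rw [hνdef]; linear_combination E10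
  have h11 : μ + ν * d = 0 := by rw [hμdef, hνdef]; linear_combination E11 + β ^ 2 * hdet
  have hdetp : det (x ^ p) = 1 := by
    rw [Matrix.det_pow]
    show (det (u : Matrix (Fin 2) (Fin 2) (ZMod p))) ^ p = 1
    rw [u.prop, one_pow]
  rw [hp1, Matrix.det_fin_two] at hdetp
  simp only [Matrix.add_apply, Matrix.smul_apply, Matrix.one_apply, smul_eq_mul, if_true,
    if_false, Fin.zero_eq_one_iff, Fin.one_eq_zero_iff, ← hadef, ← hbdef, ← hcdef,
    ← hddef] at hdetp
  norm_num at hdetp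
  have e4 : α ^ 2 + t * α * β + β ^ 2 = 1 := by
    first
      | linear_combination hdetp + β ^ 2 * hdet
      | linear_combination hdetp - β ^ 2 * hdet
  have hν : ν = 0 := by
    by_contra hν
    have hb : b = 0 := (mul_eq_zero.1 h01).resolve_left hν
    have hcz : c = 0 := (mul_eq_zero.1 h10).resolve_left hν
    have had : a * d = 1 := by linear_combination hdet + c * hb
    have hsub : ν * (a - d) = 0 := by linear_combination h00 - h11
    have had2 : a - d = 0 := (mul_eq_zero.1 hsub).resolve_left hν
    exact ht4 (by linear_combination (a - d) * had2 + 4 * had)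
  have hμ : μ = 0 := by linear_combination h00 - a * hν
  have e2 : α ^ 2 - β ^ 2 - t * α + 1 = 0 := by rw [← hμdef]; exact hμ
  have e3 : 2 * α * β + β ^ 2 * t - t * β = 0 := by rw [← hνdef]; exact hν
  have hβ2 : β ^ 2 = 1 := by
    by_cases hb0 : β = 0
    · exfalso
      apply ht4
      have hα : α ^ 2 = 1 := by linear_combination e4 - (t * α + β) * hb0
      have htα : t * α = 2 := by linear_combination -e2 + hα - β * hb0
      linear_combination (t * α + 2) * htα - t ^ 2 * hα
    · have h5 : (t ^ 2 - 4) * (β * (β ^ 2 - 1)) = 0 := by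
        linear_combination t * (1 + β) * e3 + 2 * β * e2 - 2 * β * e4
      rcases mul_eq_zero.1 h5 with h | h
      · exact absurd (by linear_combination h) ht4
      · rcases mul_eq_zero.1 h with h | h
        · exact absurd h hb0
        · linear_combination h
  have hppos : 0 < p * p := Nat.mul_pos hp.pos hp.pos
  rcases mul_self_eq_one_iff.1 (by linear_combination hβ2) with hb1 | hb1
  · -- β = 1, α = 0, x^p = x
    have h2a : 2 * α = 2 * 0 := by linear_combination e3 - (2 * α + t * β) * hb1
    have hα0 : α = 0 := mul_left_cancel₀ h2z h2a
    have hxp : x ^ p = x := by rw [hp1, hα0, hb1]; simp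
    have hu : u ^ p = u := Subtype.ext (by
      rw [Matrix.SpecialLinearGroup.coe_pow]; exact hxp)
    have h1 : u ^ (p * p) = u := by rw [pow_mul, hu, hu]
    have h2 : u ^ (p * p - 1) * u = 1 * u := by
      rw [one_mul, ← pow_succ, Nat.sub_add_cancel hppos, h1]
    exact mul_right_cancel h2
  · -- β = -1, α = t, x^(p+1) = 1
    have h2a : 2 * α = 2 * t := by linear_combination -e3 + (2 * α + t * β - 2 * t) * hb1
    have hαt : α = t := mul_left_cancel₀ h2z h2a
    have hxp : x ^ p = t • (1 : Matrix (Fin 2) (Fin 2) (ZMod p)) - x := by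
      rw [hp1, hαt, hb1]; module
    have hx1 : x ^ (p + 1) = 1 := by
      rw [pow_succ, hxp, sub_mul, smul_mul_assoc, one_mul, hchar]
      abel
    have hu : u ^ (p + 1) = 1 := Subtype.ext (by
      rw [Matrix.SpecialLinearGroup.coe_pow]; exact hx1)
    have hfac : (p + 1) * (p - 1) = p * p - 1 := by
      have hq1 : 1 ≤ p := hp.one_le
      obtain ⟨q, rfl⟩ : ∃ q, p = q + 1 := ⟨p - 1, by omega⟩
      have h1 : (q + 1) * (q + 1) = q * q + 2 * q + 1 := by ring
      rw [h1, Nat.add_sub_cancel]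
      have h2 : q + 1 + 1 = q + 2 := by ring
      rw [h2, Nat.add_sub_cancel]
      ring
    rw [← hfac, pow_mul, hu, one_pow]

/-- every element of `Σ(a,c)` is killed by a common exponent of `a`, `c`, `a*c`. -/
lemma beauvilleSigma_pow_eq_one {G : Type*} [Group G] {a c : G} {m : ℕ}
    (ha : a ^ m = 1) (hc : c ^ m = 1) (hac : (a * c) ^ m = 1) {x : G}
    (hx : x ∈ beauvilleSigma a c) : x ^ m = 1 := by
  simp only [beauvilleSigma, Set.mem_iUnion, Set.mem_insert_iff, Set.mem_singleton_iff] at hx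
  obtain ⟨g, i, hx⟩ := hx
  have key : ∀ b : G, b ^ m = 1 → (g * b ^ i * g⁻¹) ^ m = 1 := by
    intro b hb
    rw [conj_pow, ← pow_mul, mul_comm i m, pow_mul, hb, one_pow, mul_one, mul_inv_cancel]
  rcases hx with h | h | h <;> rw [h]
  · exact key a ha
  · exact key c hc
  · exact key (a * c) hac

lemma one_mem_beauvilleSigma {G : Type*} [Group G] (a c : G) : 1 ∈ beauvilleSigma a c := by
  simp only [beauvilleSigma, Set.mem_iUnion, Set.mem_insert_iff, Set.mem_singleton_iff]
  exact ⟨1, 0, Or.inl (by simp)⟩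

/-- the negative of the identity in `SL(2, ZMod p)` -/
def negOne (p : ℕ) [Fact p.Prime] : SL2 p :=
  ⟨!![-1, 0; 0, -1], by simp [Matrix.det_fin_two_of]⟩

lemma negOne_coe : ((negOne p : SL2 p) : Matrix (Fin 2) (Fin 2) (ZMod p)) = -1 := by
  ext i j
  fin_cases i <;> fin_cases j <;> simp [negOne, Matrix.one_apply]

lemma negOne_mem_center : negOne p ∈ Subgroup.center (SL2 p) := by
  rw [Subgroup.mem_center_iff]
  intro g
  apply Subtype.ext
  rw [Matrix.SpecialLinearGroup.coe_mul, Matrix.SpecialLinearGroup.coe_mul, negOne_coe,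
    mul_neg_one, neg_one_mul]

lemma prime_cast_ne_zero {q : ℕ} (hq : q.Prime) (hpq : p ≠ q) : ((q : ℕ) : ZMod p) ≠ 0 := by
  apply natCast_ne_zero_of_not_dvd
  intro h
  exact hpq ((Nat.prime_dvd_prime_iff_eq (Fact.out : p.Prime) hq).mp h)

lemma four_ne_zero_zmod (hp2 : p ≠ 2) : (4 : ZMod p) ≠ 0 := by
  have h2 : (2 : ZMod p) ≠ 0 := two_ne_zero_zmod (Fact.out : p.Prime) hp2
  intro h
  apply h2
  have h4 : (2 : ZMod p) * 2 = 0 := by linear_combination h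
  rcases mul_eq_zero.1 h4 with h' | h' <;> exact h'

/-- the unipotent pair: `a₁ = tEl (-4)`, `c₁ = lEl 1`. -/
lemma closure_pair1 (hp2 : p ≠ 2) :
    Subgroup.closure ({tEl (-4), lEl 1} : Set (SL2 p)) = ⊤ := by
  rw [eq_top_iff, ← closure_tl_eq_top]
  apply (Subgroup.closure_le _).2
  rintro x (rfl | rfl)
  · exact tEl_one_mem (neg_ne_zero.2 (four_ne_zero_zmod hp2))
      (Subgroup.subset_closure (by simp))
  · exact Subgroup.subset_closure (by simp)

lemma prod_pair1_pow_card (hp2 : p ≠ 2) :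
    ((tEl (-4) * lEl 1 : SL2 p)) ^ p = negOne p := by
  have hp := (Fact.out : p.Prime)
  have hodd : Odd p := hp.odd_of_ne_two hp2
  have hcoe : ((tEl (-4) * lEl 1 : SL2 p) : Matrix (Fin 2) (Fin 2) (ZMod p))
      = !![-3, -4; 1, 1] := by
    simp only [Matrix.SpecialLinearGroup.coe_mul]
    ext i j
    fin_cases i <;> fin_cases j <;>
      simp [tEl, lEl, Matrix.SpecialLinearGroup.coe_mul, Matrix.mul_apply, Fin.sum_univ_two] <;>
      norm_num
  set K : Matrix (Fin 2) (Fin 2) (ZMod p) := !![2, 4; -1, -2] with hK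
  have hK2 : K * K = 0 := by
    ext i j
    fin_cases i <;> fin_cases j <;>
      simp [hK, Matrix.mul_apply, Fin.sum_univ_two] <;> norm_num
  have hKp : K ^ p = 0 := by
    have h1 : K ^ p = K ^ 2 * K ^ (p - 2) := by
      rw [← pow_add]
      congr 1
      have := hp.two_le
      omega
    rw [h1, pow_two, hK2, zero_mul]
  have hN : (!![-3, -4; 1, 1] : Matrix (Fin 2) (Fin 2) (ZMod p)) = -(1 + K) := by
    ext i j
    fin_cases i <;> fin_cases j <;> simp [hK, Matrix.one_apply] <;> norm_num
  have hNp : (1 + K) ^ p = 1 := by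
    rw [add_pow_char_of_commute _ (Commute.one_left K), one_pow, hKp, add_zero]
  apply Subtype.ext
  rw [Matrix.SpecialLinearGroup.coe_pow, hcoe, negOne_coe, hN, neg_pow, hNp, mul_one,
    hodd.neg_one_pow]

/-- the semisimple pair: `a₂ = tEl 1 * lEl 1`, `c₂ = tEl (-1) * lEl 1`. -/
lemma closure_pair2 (hp2 : p ≠ 2) :
    Subgroup.closure ({tEl 1 * lEl 1, tEl (-1) * lEl 1} : Set (SL2 p)) = ⊤ := by
  set a2 : SL2 p := tEl 1 * lEl 1 with ha2
  set c2 : SL2 p := tEl (-1) * lEl 1 with hc2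
  have ht2 : (tEl 2 : SL2 p) = a2 * c2⁻¹ := by
    rw [ha2, hc2, _root_.mul_inv_rev, tEl_inv, lEl_inv, neg_neg, mul_assoc, ← mul_assoc (lEl 1),
      lEl_mul, add_neg_cancel, lEl_zero, one_mul, tEl_mul]
    norm_num
  have hT : (tEl 1 : SL2 p) ∈ Subgroup.closure ({a2, c2} : Set (SL2 p)) := by
    apply tEl_one_mem (two_ne_zero_zmod (Fact.out : p.Prime) hp2)
    rw [ht2]
    exact mul_mem (Subgroup.subset_closure (by simp))
      (inv_mem (Subgroup.subset_closure (by simp)))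
  have hL : (lEl 1 : SL2 p) ∈ Subgroup.closure ({a2, c2} : Set (SL2 p)) := by
    have h : (lEl 1 : SL2 p) = (tEl 1)⁻¹ * a2 := by rw [ha2]; group
    rw [h]
    exact mul_mem (inv_mem hT) (Subgroup.subset_closure (by simp))
  rw [eq_top_iff, ← closure_tl_eq_top]
  apply (Subgroup.closure_le _).2
  rintro x (rfl | rfl)
  · exact hT
  · exact hL

end Aux

section Main

variable {p : ℕ} [Fact p.Prime]

lemma coe_a2 : ((tEl 1 * lEl 1 : SL2 p) : Matrix (Fin 2) (Fin 2) (ZMod p)) = !![2, 1; 1, 1] := by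
  simp only [Matrix.SpecialLinearGroup.coe_mul]
  ext i j
  fin_cases i <;> fin_cases j <;>
    simp [tEl, lEl, Matrix.SpecialLinearGroup.coe_mul, Matrix.mul_apply, Fin.sum_univ_two] <;>
    norm_num

lemma coe_c2 : ((tEl (-1) * lEl 1 : SL2 p) : Matrix (Fin 2) (Fin 2) (ZMod p))
    = !![0, -1; 1, 1] := by
  simp only [Matrix.SpecialLinearGroup.coe_mul]
  ext i j
  fin_cases i <;> fin_cases j <;>
    simp [tEl, lEl, Matrix.SpecialLinearGroup.coe_mul, Matrix.mul_apply, Fin.sum_univ_two] <;>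
    norm_num

lemma coe_a2c2 : (((tEl 1 * lEl 1) * (tEl (-1) * lEl 1) : SL2 p) :
    Matrix (Fin 2) (Fin 2) (ZMod p)) = !![1, -1; 1, 0] := by
  have h := coe_a2 (p := p)
  have h' := coe_c2 (p := p)
  rw [Matrix.SpecialLinearGroup.coe_mul, h, h']
  ext i j
  fin_cases i <;> fin_cases j <;>
    simp [Matrix.mul_apply, Fin.sum_univ_two] <;> norm_num

lemma a2_pow (hp2 : p ≠ 2) (hp5 : p ≠ 5) : (tEl 1 * lEl 1 : SL2 p) ^ (p * p - 1) = 1 := by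
  apply pow_card_sq_sub_one hp2
  rw [coe_a2]
  have h5 : ((5 : ℕ) : ZMod p) ≠ 0 := prime_cast_ne_zero (by norm_num) hp5
  intro h
  apply h5
  push_cast
  norm_num at h
  linear_combination h

lemma c2_pow (hp2 : p ≠ 2) (hp3 : p ≠ 3) : (tEl (-1) * lEl 1 : SL2 p) ^ (p * p - 1) = 1 := by
  apply pow_card_sq_sub_one hp2
  rw [coe_c2]
  have h3 : ((3 : ℕ) : ZMod p) ≠ 0 := prime_cast_ne_zero (by norm_num) hp3
  intro h
  apply h3
  push_cast
  norm_num at h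
  linear_combination -h

lemma a2c2_pow (hp2 : p ≠ 2) (hp3 : p ≠ 3) :
    ((tEl 1 * lEl 1) * (tEl (-1) * lEl 1) : SL2 p) ^ (p * p - 1) = 1 := by
  apply pow_card_sq_sub_one hp2
  rw [coe_a2c2]
  have h3 : ((3 : ℕ) : ZMod p) ≠ 0 := prime_cast_ne_zero (by norm_num) hp3
  intro h
  apply h3
  push_cast
  norm_num at h
  linear_combination -h

end Main

/-- For every prime `p ∉ {2, 3, 5}` the group `PSL(2, 𝔽_p)` (the quotient of
`SL(2, 𝔽_p)` by its center) admits an unmixed Beauville structure. -/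
theorem PSL2_unmixedBeauville (p : ℕ) (hp : p.Prime) (h2 : p ≠ 2) (h3 : p ≠ 3)
    (h5 : p ≠ 5) :
    ∃ a₁ c₁ a₂ c₂ :
        Matrix.SpecialLinearGroup (Fin 2) (ZMod p) ⧸
          Subgroup.center (Matrix.SpecialLinearGroup (Fin 2) (ZMod p)),
      IsUnmixedBeauvilleStructure a₁ c₁ a₂ c₂ := by
  haveI : Fact p.Prime := ⟨hp⟩
  set G := SL2 p with hG
  let Z := Subgroup.center (SL2 p)
  let π : SL2 p →* SL2 p ⧸ Z := QuotientGroup.mk' Z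
  have hπs : Function.Surjective π := QuotientGroup.mk'_surjective Z
  -- SL₂ level elements
  set a1 : SL2 p := tEl (-4) with ha1
  set c1 : SL2 p := lEl 1 with hc1
  set a2 : SL2 p := tEl 1 * lEl 1 with ha2
  set c2 : SL2 p := tEl (-1) * lEl 1 with hc2
  refine ⟨π a1, π c1, π a2, π c2, ?_, ?_, ?_⟩
  -- generation of the first pair
  · have h := closure_pair1 (p := p) h2
    have hmap := Subgroup.map_top_of_surjective π hπs
    rw [← h, MonoidHom.map_closure] at hmap
    rwa [Set.image_insert_eq, Set.image_singleton] at hmap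
  -- generation of the second pair
  · have h := closure_pair2 (p := p) h2
    have hmap := Subgroup.map_top_of_surjective π hπs
    rw [← h, MonoidHom.map_closure] at hmap
    rwa [Set.image_insert_eq, Set.image_singleton] at hmap
  -- disjointness of the Σ-sets
  · have hA1 : (π a1) ^ p = 1 := by
      rw [← MonoidHom.map_pow π, ha1, tEl_pow_card, MonoidHom.map_one π]
    have hC1 : (π c1) ^ p = 1 := by
      rw [← MonoidHom.map_pow π, hc1, lEl_pow_card, MonoidHom.map_one π]
    have hAC1 : (π a1 * π c1) ^ p = 1 := by
      rw [← MonoidHom.map_mul π, ← MonoidHom.map_pow π, prod_pair1_pow_card h2]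
      exact (QuotientGroup.eq_one_iff _).2 negOne_mem_center
    have hA2 : (π a2) ^ (p * p - 1) = 1 := by
      rw [← MonoidHom.map_pow π, ha2, a2_pow h2 h5, MonoidHom.map_one π]
    have hC2 : (π c2) ^ (p * p - 1) = 1 := by
      rw [← MonoidHom.map_pow π, hc2, c2_pow h2 h3, MonoidHom.map_one π]
    have hAC2 : (π a2 * π c2) ^ (p * p - 1) = 1 := by
      rw [← MonoidHom.map_mul π, ← MonoidHom.map_pow π, a2c2_pow h2 h3, MonoidHom.map_one π]
    have hco : Nat.Coprime p (p * p - 1) := by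
      apply hp.coprime_iff_not_dvd.2
      intro hdvd
      have hm : 1 ≤ p * p := Nat.mul_pos hp.pos hp.pos
      have h1 : p ∣ p * p - (p * p - 1) := Nat.dvd_sub (Dvd.intro p rfl) hdvd
      rw [Nat.sub_sub_self hm] at h1
      exact absurd (Nat.dvd_one.mp h1) hp.one_lt.ne'
    ext x
    simp only [Set.mem_inter_iff, Set.mem_singleton_iff]
    constructor
    · rintro ⟨hx1, hx2⟩
      have hxp : x ^ p = 1 := beauvilleSigma_pow_eq_one hA1 hC1 hAC1 hx1
      have hxn : x ^ (p * p - 1) = 1 := beauvilleSigma_pow_eq_one hA2 hC2 hAC2 hx2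
      have hd : orderOf x ∣ Nat.gcd p (p * p - 1) :=
        Nat.dvd_gcd (orderOf_dvd_of_pow_eq_one hxp) (orderOf_dvd_of_pow_eq_one hxn)
      rw [hco] at hd
      exact orderOf_eq_one_iff.mp (Nat.dvd_one.mp hd)
    · rintro rfl
      exact ⟨one_mem_beauvilleSigma _ _, one_mem_beauvilleSigma _ _⟩
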